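/- Let S be a finite set of pairwise distinct linear maps ℝ^r → ℝ, and let e₁,…,e_r denote the standard basis of ℝ^r. Suppose f* ∈ S is such that the vector (f*(e₁),…,f*(e_r)) is lexicographically minimal among the vectors (f(e₁),…,f(e_r)) for f ∈ S. Then there exists a nonempty open set U ⊆ (0,∞)^r such that f*(x) < f(x) for all x ∈ U and all f ∈ S with f ≠ f*. -/
import Mathlib

/-- Lexicographic order on vectors in `Fin r → ℝ`. -/
def LexLE {r : ℕ} (a b : Fin r → ℝ) : Prop :=
  a = b ∨ ∃ k, (∀ j, j < k → a j = b j) ∧ a k < b k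

private lemma expand_aux (r : ℕ) (h : (Fin r → ℝ) →ₗ[ℝ] ℝ) (t : ℝ) :
    h (fun i : Fin r => t ^ ((i:ℕ)+1)) = ∑ i : Fin r, t ^ ((i:ℕ)+1) * h (Pi.single i 1) := by
  have : (fun i : Fin r => t ^ ((i:ℕ)+1))
      = ∑ i : Fin r, (t ^ ((i:ℕ)+1)) • (Pi.single i 1 : Fin r → ℝ) := by
    funext j
    simp [Finset.sum_apply, Pi.single_apply]
  rw [this, map_sum]
  simp [smul_eq_mul]

theorem stmt5 (r : ℕ) (S : Finset ((Fin r → ℝ) →ₗ[ℝ] ℝ)) (fstar : (Fin r → ℝ) →ₗ[ℝ] ℝ)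
    (hmem : fstar ∈ S)
    (hmin : ∀ f ∈ S, LexLE (fun i => fstar (Pi.single i 1)) (fun i => f (Pi.single i 1))) :
    ∃ U : Set (Fin r → ℝ), IsOpen U ∧ U.Nonempty ∧ (∀ x ∈ U, ∀ i, 0 < x i) ∧
      ∀ x ∈ U, ∀ f ∈ S, f ≠ fstar → fstar x < f x := by
  classical
  set x : ℝ → (Fin r → ℝ) := fun t => fun i : Fin r => t ^ ((i:ℕ)+1) with hxdef
  -- key: for each f ≠ fstar, eventually fstar (x t) < f (x t) for small t > 0
  have key : ∀ f ∈ S, f ≠ fstar →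
      ∀ᶠ t in nhdsWithin 0 (Set.Ioi (0:ℝ)), fstar (x t) < f (x t) := by
    intro f hf hne
    rcases hmin f hf with heq | ⟨k, hjk, hk⟩
    · refine absurd ?_ hne
      refine Module.Basis.ext (Pi.basisFun ℝ (Fin r)) fun i => ?_
      simpa using (congrFun heq i).symm
    · set c : Fin r → ℝ := fun i => f (Pi.single i 1) - fstar (Pi.single i 1) with hc
      have hck : 0 < c k := sub_pos.mpr hk
      have hcj : ∀ j, j < k → c j = 0 := fun j hj => by
        simp [hc, hjk j hj]
      set q : ℝ → ℝ := fun t =>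
        ∑ i ∈ Finset.univ.filter (fun i : Fin r => k ≤ i), c i * t ^ ((i:ℕ) - (k:ℕ)) with hq
      have hqc : Continuous q := by
        apply continuous_finset_sum
        intro i _
        exact (continuous_const.mul (continuous_pow _))
      have hq0 : q 0 = c k := by
        show (∑ i ∈ Finset.univ.filter (fun i : Fin r => k ≤ i),
          c i * (0:ℝ) ^ ((i:ℕ) - (k:ℕ))) = c k
        rw [Finset.sum_eq_single k]
        · simp
        · intro i hi hik
          have h1 : (k:ℕ) ≤ (i:ℕ) := by
            simp only [Finset.mem_filter] at hi
            exact hi.2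
          have h2 : (i:ℕ) ≠ (k:ℕ) := fun h => hik (Fin.ext h)
          have : (i:ℕ) - (k:ℕ) ≠ 0 := by omega
          simp [zero_pow this]
        · intro hk'
          simp at hk'
      have hqpos : ∀ᶠ t in nhds (0:ℝ), 0 < q t :=
        (hqc.tendsto 0).eventually (eventually_gt_nhds (hq0 ▸ hck))
      filter_upwards [nhdsWithin_le_nhds hqpos, self_mem_nhdsWithin] with t hqt ht
      have htpos : (0:ℝ) < t := ht
      have hexp : f (x t) - fstar (x t) = t ^ ((k:ℕ)+1) * q t := by
        have h1 : f (x t) - fstar (x t) = ∑ i : Fin r, t ^ ((i:ℕ)+1) * c i := by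
          rw [hxdef]
          simp only [expand_aux]
          rw [← Finset.sum_sub_distrib]
          congr 1
          funext i
          ring
        rw [h1, hq, Finset.mul_sum]
        rw [← Finset.sum_filter_of_ne (p := fun i : Fin r => k ≤ i)
          (f := fun i : Fin r => t ^ ((i:ℕ)+1) * c i)]
        · apply Finset.sum_congr rfl
          intro i hi
          simp only [Finset.mem_filter] at hi
          have hki : (k:ℕ) ≤ (i:ℕ) := hi.2
          have : ((k:ℕ)+1) + ((i:ℕ) - (k:ℕ)) = (i:ℕ)+1 := by omega
          rw [← this, pow_add]
          ring
        · intro i _ hne'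
          by_contra hlt
          push_neg at hlt
          exact hne' (by rw [hcj i hlt, mul_zero])
      have : 0 < f (x t) - fstar (x t) := by
        rw [hexp]
        exact mul_pos (pow_pos htpos _) hqt
      linarith
  -- combine over the finite set S
  have hall : ∀ᶠ t in nhdsWithin 0 (Set.Ioi (0:ℝ)),
      ∀ f ∈ S, f ≠ fstar → fstar (x t) < f (x t) := by
    rw [Filter.eventually_all_finset]
    intro f hf
    by_cases hne : f = fstar
    · filter_upwards with t h
      exact absurd hne h
    · filter_upwards [key f hf hne] with t ht _
      exact ht
  obtain ⟨t, ht, htpos⟩ := (hall.and self_mem_nhdsWithin).exists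
  have htpos : (0:ℝ) < t := htpos
  refine ⟨{y | (∀ i, 0 < y i) ∧ ∀ f ∈ S, f ≠ fstar → fstar y < f y}, ?_, ?_, ?_, ?_⟩
  · have h1 : IsOpen {y : Fin r → ℝ | ∀ i, 0 < y i} := by
      have : {y : Fin r → ℝ | ∀ i, 0 < y i} = ⋂ i, {y | 0 < y i} := by
        ext; simp
      rw [this]
      exact isOpen_iInter_of_finite fun i =>
        isOpen_lt continuous_const (continuous_apply i)
    have h2 : ∀ f : (Fin r → ℝ) →ₗ[ℝ] ℝ, IsOpen {y : Fin r → ℝ | fstar y < f y} :=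
      fun f => isOpen_lt fstar.continuous_of_finiteDimensional
        f.continuous_of_finiteDimensional
    have heq : {y : Fin r → ℝ | (∀ i, 0 < y i) ∧ ∀ f ∈ S, f ≠ fstar → fstar y < f y}
        = {y : Fin r → ℝ | ∀ i, 0 < y i} ∩
          ⋂ f ∈ S, ⋂ (_ : f ≠ fstar), {y | fstar y < f y} := by
      ext y
      simp only [Set.mem_setOf_eq, Set.mem_inter_iff, Set.mem_iInter]
    rw [heq]
    exact h1.inter (isOpen_biInter_finset fun f hf =>
      isOpen_iInter_of_finite fun _ => h2 f)
  · exact ⟨x t, fun i => pow_pos htpos _, ht⟩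
  · intro y hy i
    exact hy.1 i
  · intro y hy f hf hne
    exact hy.2 f hf hne
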